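/- Let P be a non-singleton member of the extended image set I with S_P nonempty. For every s ∈ S_P and every tile T of P, T·s is again a tile of P, and the map T ↦ T·s is a permutation of tiles(P). Consequently the holonomy group H_P is a subgroup of Sym(tiles(P)), and the map sending the restriction s|_P ∈ G_P to the induced permutation of tiles(P) is a well-defined surjective group homomorphism from G_P onto H_P. -/

import Mathlib

namespace Holonomy

variable {X : Type*}

/-- The extended image set `I = {X·s : s ∈ S} ∪ {X} ∪ {{x} : x ∈ X}`,
with the state set taken to be `Set.univ`. -/
def extImgs (S : Set (X → X)) : Set (Set X) :=
  {P : Set X | ∃ s ∈ S, P = s '' (Set.univ : Set X)} ∪ {(Set.univ : Set X)} ∪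
    {P : Set X | ∃ x : X, P = {x}}

/-- `C` is a maximal chain (w.r.t. inclusion) inside the family `I`. -/
def IsMaxChainIn (I : Set (Set X)) (C : Set (Set X)) : Prop :=
  C ⊆ I ∧ IsChain (· ⊆ ·) C ∧
    ∀ D : Set (Set X), D ⊆ I → IsChain (· ⊆ ·) D → C ⊆ D → D = C

/-- `𝒞`, the maximal chains in the extended image set. -/
def MaxChain (S : Set (X → X)) : Type _ :=
  {C : Set (Set X) // IsMaxChainIn (extImgs S) C}

/-- The action of `s` on a chain, `C·s = {P·s : P ∈ C}`. -/
def chainAct (C : Set (Set X)) (s : X → X) : Set (Set X) :=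
  (fun P => s '' P) '' C

/-- Chains `C` and `D` agree down to `P`. -/
def AgreeDownTo (C D : Set (Set X)) (P : Set X) : Prop :=
  P ∈ C ∧ P ∈ D ∧ ∀ Q : Set X, P ⊆ Q → (Q ∈ C ↔ Q ∈ D)

/-- `sh : 𝒞 → 𝒞` is a lift of `s`: `C·s ⊆ sh C` for every maximal chain `C`. -/
def IsLift (S : Set (X → X)) (s : X → X) (sh : MaxChain S → MaxChain S) : Prop :=
  ∀ C : MaxChain S, chainAct C.val s ⊆ (sh C).val

/-- `sh` is consistent with chain structure. -/
def Consistent (S : Set (X → X)) (s : X → X) (sh : MaxChain S → MaxChain S) : Prop :=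
  ∀ (C C' : MaxChain S) (P : Set X),
    AgreeDownTo C.val C'.val P → AgreeDownTo (sh C).val (sh C').val (s '' P)

/-- Product of a list of transformations, in left-to-right (right-action) order:
`prodList [a₁,…,a_k] = a₁⋯a_k`, i.e. `x ↦ a_k (⋯ (a₁ x))`. -/
def prodList {α : Type*} (l : List (α → α)) : α → α :=
  fun x => l.foldl (fun y f => f y) x

/-- Subduction: `P ⊆_S Q` iff `P ⊆ Q·s` for some `s ∈ S¹ = S ∪ {id}`. -/
def Subduction (S : Set (X → X)) (P Q : Set X) : Prop :=
  ∃ s ∈ insert (id : X → X) S, P ⊆ s '' Q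

/-- `P ≡_S Q`. -/
def SubEquiv (S : Set (X → X)) (P Q : Set X) : Prop :=
  Subduction S P Q ∧ Subduction S Q P

/-- Strict subduction `P ⊂_S Q`. -/
def SSubduction (S : Set (X → X)) (P Q : Set X) : Prop :=
  Subduction S P Q ∧ ¬ Subduction S Q P

/-- `P` is not a singleton. -/
def nonSingleton (P : Set X) : Prop := ¬ ∃ x : X, P = {x}

/-- The height of `Q`: the largest length of a strict subduction chain of
non-singleton members of `I` ending at `Q` (`0` for singletons, since then no
such chain exists). -/
noncomputable def height (S : Set (X → X)) (Q : Set X) : ℕ :=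
  sSup {n : ℕ | ∃ l : List (Set X), l.length = n ∧
    (∀ R ∈ l, R ∈ extImgs S ∧ nonSingleton R) ∧
    l.Chain' (SSubduction S) ∧ l.getLast? = some Q}

/-- Depth: `d(Q) = h(X) - h(Q) + 1`. -/
noncomputable def depth (S : Set (X → X)) (Q : Set X) : ℕ :=
  height S (Set.univ : Set X) - height S Q + 1

/-- The tiles of `P`: maximal elements (w.r.t. inclusion) of `{Q ∈ I : Q ⊊ P}`. -/
def tiles (S : Set (X → X)) (P : Set X) : Set (Set X) :=
  {Q | (Q ∈ extImgs S ∧ Q ⊂ P) ∧ ∀ R : Set X, R ∈ extImgs S → R ⊂ P → Q ⊆ R → Q = R}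

/-- The permutator group `G_P` of `P`, as a set of permutations of `P`. -/
def permutator (S : Set (X → X)) (P : Set X) : Set (Equiv.Perm ↥P) :=
  {σ | ∃ s ∈ S, s '' P = P ∧ ∀ p : ↥P, (σ p : X) = s (p : X)}

/-- The holonomy group `H_P` of `P`, as a set of permutations of `tiles P`. -/
def holonomyGroup (S : Set (X → X)) (P : Set X) : Set (Equiv.Perm ↥(tiles S P)) :=
  {σ | ∃ s ∈ S, s '' P = P ∧ ∀ T : ↥(tiles S P), ((σ T : Set X) : Set X) = s '' ((T : Set X) : Set X)}



/-- The state of approximation at level `i` of the positioned chain of a maximal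
chain `C`: `α_1 = X`, and for `i > 1`, `α_i` is the entry of the positioned chain
at the largest filled position `j < i`.  Since position `d(P)` of the positioned
chain of `C : X = P₁ ⊋ ⋯ ⊋ P_k` holds the successor of `P` for each non-minimal
member `P`, `α_i` is the smallest member of `C` whose immediate predecessor in
`C` has depth `< i`. -/
noncomputable def alpha (S : Set (X → X)) (C : Set (Set X)) (i : ℕ) : Set X :=
  if i ≤ 1 then Set.univ
  else ⋂₀ {Q | Q ∈ C ∧ ∀ P : Set X,
    (P ∈ C ∧ Q ⊂ P ∧ ∀ R ∈ C, Q ⊂ R → P ⊆ R) → depth S P < i}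

/-- The chosen equivalence-class representatives of depth `i`. -/
def RepsAt (S : Set (X → X)) (rep : Set X → Set X) (i : ℕ) : Set (Set X) :=
  {R | R ∈ extImgs S ∧ nonSingleton R ∧ rep R = R ∧ depth S R = i}

/-- States of the `i`-th holonomy component `ℋ_i`:
`none` is the extra state `*`, and `some (R, T)` is the tile `T` in the copy of
`tiles(R)` in the disjoint union, for `R` a representative of depth `i`. -/
def ValidAt (S : Set (X → X)) (rep : Set X → Set X) (i : ℕ)
    (t : Option (Set X × Set X)) : Prop :=
  t = none ∨ ∃ R T : Set X, t = some (R, T) ∧ R ∈ RepsAt S rep i ∧ T ∈ tiles S R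

/-- Transformations of the `i`-th holonomy component `ℋ_i` (on its state set):
either a constant map to a state of `ℋ_i`, or an element `(h₁,…,h_k)` of
`H_{R₁} × ⋯ × H_{R_k}` acting on the copy of `tiles(R_j)` by `h_j` (that is, by
`T ↦ T·s` for some `s` stabilizing `R_j`) and fixing `*`. -/
def IsHolTrans (S : Set (X → X)) (rep : Set X → Set X) (i : ℕ)
    (φ : Option (Set X × Set X) → Option (Set X × Set X)) : Prop :=
  (∃ t₀, ValidAt S rep i t₀ ∧ ∀ t, ValidAt S rep i t → φ t = t₀) ∨
  (φ none = none ∧ ∀ R ∈ RepsAt S rep i, ∃ s ∈ S, s '' R = R ∧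
    ∀ T ∈ tiles S R, φ (some (R, T)) = some (R, s '' T))

/-- `F` is an element of the wreath product `ℋ₁ ≀ ⋯ ≀ ℋ_d` of the holonomy
components: the action on each coordinate `i` depends only on the coordinates
above it (through a dependency function), and on every valid state this
component action is a transformation of `ℋ_i`. -/
def IsCascade (S : Set (X → X)) (rep : Set X → Set X) (d : ℕ)
    (F : (Fin d → Option (Set X × Set X)) → (Fin d → Option (Set X × Set X))) : Prop :=
  ∀ i : Fin d, ∃ g : (Fin d → Option (Set X × Set X)) →
      (Option (Set X × Set X) → Option (Set X × Set X)),
    (∀ t, F t i = g t (t i)) ∧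
    (∀ t t', (∀ j : Fin d, j < i → t j = t' j) → g t = g t') ∧
    (∀ t, (∀ j : Fin d, ValidAt S rep (j.val + 1) (t j)) →
      IsHolTrans S rep (i.val + 1) (g t))



section Aux

variable {X : Type*} [Fintype X] (S : Set (X → X))

lemma extImgs_closed (hS : ∀ s ∈ S, ∀ t ∈ S, (fun x => t (s x)) ∈ S)
    {s : X → X} (hs : s ∈ S) {Q : Set X} (hQ : Q ∈ extImgs S) :
    s '' Q ∈ extImgs S := by
  rcases hQ with (hQ | hQ) | hQ
  · obtain ⟨t, ht, rfl⟩ := hQ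
    exact Or.inl (Or.inl ⟨fun x => s (t x), hS t ht s hs, by
      rw [Set.image_image]⟩)
  · rw [Set.mem_singleton_iff] at hQ
    subst hQ
    exact Or.inl (Or.inl ⟨s, hs, rfl⟩)
  · obtain ⟨x, rfl⟩ := hQ
    exact Or.inr ⟨s x, by simp⟩

lemma iterate_mem (hS : ∀ s ∈ S, ∀ t ∈ S, (fun x => t (s x)) ∈ S)
    {s : X → X} (hs : s ∈ S) : ∀ n : ℕ, s^[n + 1] ∈ S := by
  intro n
  induction n with
  | zero => simpa using hs
  | succ n ih =>
      have : (fun x => s (s^[n + 1] x)) ∈ S := hS _ ih s hs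
      have he : (fun x => s (s^[n + 1] x)) = s^[n + 2] := by
        funext x
        simp [Function.iterate_succ_apply']
      rwa [he] at this

lemma exists_inverse (hS : ∀ s ∈ S, ∀ t ∈ S, (fun x => t (s x)) ∈ S)
    {P : Set X} {s : X → X} (hs : s ∈ S) (hsP : s '' P = P) :
    ∃ s' ∈ S, s' '' P = P ∧ (∀ p ∈ P, s' (s p) = p) ∧ (∀ p ∈ P, s (s' p) = p) := by
  have hmt : Set.MapsTo s P P := by rw [Set.mapsTo_iff_image_subset]; exact hsP.subset
  have hbij : Set.BijOn s P P :=
    (Set.Finite.surjOn_iff_bijOn_of_mapsTo (Set.toFinite P) hmt).1 hsP.symm.subset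
  -- the permutation of P induced by s
  let g : Equiv.Perm ↥P := Equiv.ofBijective
    (fun p => (⟨s p.val, hmt p.2⟩ : ↥P)) (by
      constructor
      · intro p q h
        exact Subtype.ext (hbij.injOn p.2 q.2 (congrArg Subtype.val h))
      · intro p
        obtain ⟨q, hq, hqe⟩ := hbij.surjOn p.2
        exact ⟨⟨q, hq⟩, Subtype.ext hqe⟩)
  have hgpow : ∀ (n : ℕ) (p : ↥P), ((g ^ n) p : X) = s^[n] p.val := by
    intro n
    induction n with
    | zero => intro p; simp
    | succ n ih =>
        intro p
        rw [pow_succ', Equiv.Perm.mul_apply, Function.iterate_succ_apply']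
        have : ((g ^ n) p : X) = s^[n] p.val := ih p
        show s (((g ^ n) p : X)) = _
        rw [this]
  have hk : 0 < orderOf g := orderOf_pos g
  set k := orderOf g with hkdef
  have hfix : ∀ p ∈ P, s^[k] p = p := by
    intro p hp
    have := hgpow k ⟨p, hp⟩
    rw [pow_orderOf_eq_one] at this
    simpa using this.symm
  obtain ⟨m, hm⟩ : ∃ m, k - 1 + k = m + 1 := ⟨k - 1 + k - 1, by omega⟩
  refine ⟨s^[k - 1 + k], by rw [hm]; exact iterate_mem S hS hs m, ?_, ?_, ?_⟩
  · have h1 : ∀ p ∈ P, s^[k - 1 + k] (s p) = p := by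
      intro p hp
      have : s^[k - 1 + k] (s^[1] p) = s^[k - 1 + k + 1] p := by
        rw [← Function.iterate_add_apply]
      rw [Function.iterate_one] at this
      rw [this]
      have h2 : k - 1 + k + 1 = k + k := by omega
      rw [h2, Function.iterate_add_apply, hfix p hp, hfix p hp]
    -- image equals P
    have : s^[k - 1 + k] '' P = s^[k - 1 + k] '' (s '' P) := by rw [hsP]
    rw [this, Set.image_image]
    have : (fun x => s^[k - 1 + k] (s x)) '' P = id '' P :=
      Set.image_congr (fun p hp => h1 p hp)
    rw [this, Set.image_id]
  · intro p hp
    have : s^[k - 1 + k] (s^[1] p) = s^[k - 1 + k + 1] p := by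
      rw [← Function.iterate_add_apply]
    rw [Function.iterate_one] at this
    rw [this]
    have h2 : k - 1 + k + 1 = k + k := by omega
    rw [h2, Function.iterate_add_apply, hfix p hp, hfix p hp]
  · intro p hp
    have h3 : s (s^[k - 1 + k] p) = s^[k - 1 + k + 1] p :=
      (Function.iterate_succ_apply' s _ p).symm
    rw [h3, show k - 1 + k + 1 = k + k by omega, Function.iterate_add_apply,
      hfix p hp, hfix p hp]

lemma tile_image (hS : ∀ s ∈ S, ∀ t ∈ S, (fun x => t (s x)) ∈ S)
    {P : Set X} {s : X → X} (hs : s ∈ S) (hsP : s '' P = P)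
    {T : Set X} (hT : T ∈ tiles S P) : s '' T ∈ tiles S P := by
  obtain ⟨s', hs', hs'P, hinv1, hinv2⟩ := exists_inverse S hS hs hsP
  have hrec : ∀ Q : Set X, Q ⊆ P → s' '' (s '' Q) = Q := by
    intro Q hQ
    rw [Set.image_image]
    have : (fun x => s' (s x)) '' Q = id '' Q :=
      Set.image_congr (fun q hq => hinv1 q (hQ hq))
    rw [this, Set.image_id]
  have hrec' : ∀ Q : Set X, Q ⊆ P → s '' (s' '' Q) = Q := by
    intro Q hQ
    rw [Set.image_image]
    have : (fun x => s (s' x)) '' Q = id '' Q :=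
      Set.image_congr (fun q hq => hinv2 q (hQ hq))
    rw [this, Set.image_id]
  obtain ⟨⟨hTI, hTlt⟩, hTmax⟩ := hT
  have hTP : T ⊆ P := hTlt.subset
  refine ⟨⟨extImgs_closed S hS hs hTI, ?_⟩, ?_⟩
  · refine lt_of_le_of_ne (by rw [← hsP]; exact Set.image_mono (f := s) hTP) ?_
    intro he
    have : T = s' '' P := by rw [← he, hrec T hTP]
    rw [hs'P] at this
    exact hTlt.ne this
  · intro R hRI hRP hsub
    have hTsub : T ⊆ s' '' R := by
      rw [← hrec T hTP]; exact Set.image_mono (f := s') hsub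
    have hR'I : s' '' R ∈ extImgs S := extImgs_closed S hS hs' hRI
    have hR'lt : s' '' R ⊂ P := by
      refine lt_of_le_of_ne (by rw [← hs'P]; exact Set.image_mono (f := s') hRP.subset) ?_
      intro he
      have : R = s '' P := by rw [← he, hrec' R hRP.subset]
      rw [hsP] at this
      exact hRP.ne this
    have hTeq := hTmax (s' '' R) hR'I hR'lt hTsub
    rw [hTeq, hrec' R hRP.subset]

lemma tile_bijOn (hS : ∀ s ∈ S, ∀ t ∈ S, (fun x => t (s x)) ∈ S)
    {P : Set X} {s : X → X} (hs : s ∈ S) (hsP : s '' P = P) :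
    Set.BijOn (fun T => s '' T) (tiles S P) (tiles S P) := by
  obtain ⟨s', hs', hs'P, hinv1, hinv2⟩ := exists_inverse S hS hs hsP
  have hrec : ∀ Q : Set X, Q ⊆ P → s' '' (s '' Q) = Q := by
    intro Q hQ
    rw [Set.image_image]
    have : (fun x => s' (s x)) '' Q = id '' Q :=
      Set.image_congr (fun q hq => hinv1 q (hQ hq))
    rw [this, Set.image_id]
  have hrec' : ∀ Q : Set X, Q ⊆ P → s '' (s' '' Q) = Q := by
    intro Q hQ
    rw [Set.image_image]
    have : (fun x => s (s' x)) '' Q = id '' Q :=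
      Set.image_congr (fun q hq => hinv2 q (hQ hq))
    rw [this, Set.image_id]
  refine ⟨fun T hT => tile_image S hS hs hsP hT, ?_, ?_⟩
  · intro T1 h1 T2 h2 he
    have : s' '' (s '' T1) = s' '' (s '' T2) := by
      simp only at he; rw [he]
    rwa [hrec T1 h1.1.2.subset, hrec T2 h2.1.2.subset] at this
  · intro T hT
    exact ⟨s' '' T, tile_image S hS hs' hs'P hT, hrec' T hT.1.2.subset⟩

/-- The permutation of tiles induced by a stabilizing `s`. -/
noncomputable def tilePerm (hS : ∀ s ∈ S, ∀ t ∈ S, (fun x => t (s x)) ∈ S)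
    {P : Set X} {s : X → X} (hs : s ∈ S) (hsP : s '' P = P) :
    Equiv.Perm ↥(tiles S P) :=
  Equiv.ofBijective (fun T => ⟨s '' T.val, tile_image S hS hs hsP T.2⟩) (by
    constructor
    · intro T1 T2 h
      exact Subtype.ext ((tile_bijOn S hS hs hsP).2.1 T1.2 T2.2
        (congrArg Subtype.val h))
    · intro T
      obtain ⟨T', hT', he⟩ := (tile_bijOn S hS hs hsP).2.2 T.2
      exact ⟨⟨T', hT'⟩, Subtype.ext he⟩)

lemma tilePerm_apply (hS : ∀ s ∈ S, ∀ t ∈ S, (fun x => t (s x)) ∈ S)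
    {P : Set X} {s : X → X} (hs : s ∈ S) (hsP : s '' P = P) (T : ↥(tiles S P)) :
    ((tilePerm S hS hs hsP T : Set X) : Set X) = s '' T.val := rfl

end Aux

/-- the stabilizer acts on tiles by permutations, the holonomy
group `H_P` is a subgroup of `Sym(tiles P)`, and `s|_P ↦ (T ↦ T·s)` is a
well-defined surjective group homomorphism `G_P ↠ H_P`. -/
theorem holonomy_group_and_surjection {X : Type*} [Fintype X] [Nonempty X]
    (S : Set (X → X)) (hS : ∀ s ∈ S, ∀ t ∈ S, (fun x => t (s x)) ∈ S)
    (P : Set X) (hP : P ∈ extImgs S) (hns : nonSingleton P)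
    (hstab : ∃ s ∈ S, s '' P = P) :
    (∀ s ∈ S, s '' P = P → ∀ T ∈ tiles S P, s '' T ∈ tiles S P) ∧
    (∀ s ∈ S, s '' P = P → Set.BijOn (fun T => s '' T) (tiles S P) (tiles S P)) ∧
    (1 : Equiv.Perm ↥(tiles S P)) ∈ holonomyGroup S P ∧
    (∀ σ ∈ holonomyGroup S P, ∀ τ ∈ holonomyGroup S P, σ * τ ∈ holonomyGroup S P) ∧
    (∀ σ ∈ holonomyGroup S P, σ⁻¹ ∈ holonomyGroup S P) ∧
    ∃ ψ : Equiv.Perm ↥P → Equiv.Perm ↥(tiles S P),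
      (∀ σ ∈ permutator S P, ψ σ ∈ holonomyGroup S P) ∧
      (∀ σ ∈ permutator S P, ∀ τ ∈ permutator S P, ψ (σ * τ) = ψ σ * ψ τ) ∧
      (∀ h ∈ holonomyGroup S P, ∃ σ ∈ permutator S P, ψ σ = h) ∧
      (∀ s ∈ S, s '' P = P → ∀ σ ∈ permutator S P, (∀ p : ↥P, (σ p : X) = s p) →
        ∀ T : ↥(tiles S P), ((ψ σ T : Set X) : Set X) = s '' (T : Set X)) := by
  classical
  have himg : ∀ {s : X → X}, (∀ p ∈ P, s p = p) → ∀ Q : Set X, Q ⊆ P → s '' Q = Q := by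
    intro s h Q hQ
    have : s '' Q = id '' Q := Set.image_congr (fun q hq => h q (hQ hq))
    rw [this, Set.image_id]
  -- well-definedness of the induced map on tiles
  have hagree : ∀ {s t : X → X}, (∀ p ∈ P, s p = t p) → ∀ Q : Set X, Q ⊆ P →
      s '' Q = t '' Q := fun h Q hQ => Set.image_congr (fun q hq => h q (hQ hq))
  refine ⟨fun s hs hsP T hT => tile_image S hS hs hsP hT,
    fun s hs hsP => tile_bijOn S hS hs hsP, ?_, ?_, ?_, ?_⟩
  · -- identity
    obtain ⟨s, hs, hsP⟩ := hstab
    obtain ⟨s', hs', hs'P, hinv1, _⟩ := exists_inverse S hS hs hsP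
    refine ⟨fun x => s' (s x), hS s hs s' hs', ?_, ?_⟩
    · show (fun x => s' (s x)) '' P = P
      exact himg (fun p hp => hinv1 p hp) P subset_rfl
    · intro T
      have := (himg (fun p hp => hinv1 p hp) (T : Set X) T.2.1.2.subset).symm
      simpa [Set.image_id'] using this
  · -- closure under multiplication
    rintro σ ⟨s, hs, hsP, hσ⟩ τ ⟨t, ht, htP, hτ⟩
    refine ⟨fun x => s (t x), hS t ht s hs, ?_, ?_⟩
    · show (fun x => s (t x)) '' P = P
      rw [← Set.image_image, htP, hsP]
    · intro T
      rw [Equiv.Perm.mul_apply, hσ, hτ]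
      simp [Set.image_image, Set.image_id']
  · -- closure under inverse
    rintro σ ⟨s, hs, hsP, hσ⟩
    obtain ⟨s', hs', hs'P, hinv1, _⟩ := exists_inverse S hS hs hsP
    refine ⟨s', hs', hs'P, ?_⟩
    intro T
    have h1 : ((T : Set X) : Set X) = s '' ((σ⁻¹ T : Set X) : Set X) := by
      have := hσ (σ⁻¹ T)
      rw [show σ (σ⁻¹ T) = T from σ.apply_symm_apply T] at this
      simpa [Set.image_id'] using this
    have h2 := (himg (fun p hp => hinv1 p hp) ((σ⁻¹ T : Set X) : Set X)
      (σ⁻¹ T).2.1.2.subset).symm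
    rw [h1, Set.image_image]
    exact h2
  · -- the homomorphism
    have hψkey : ∀ (σ : Equiv.Perm ↥P) (h : σ ∈ permutator S P),
        ∀ s ∈ S, s '' P = P → (∀ p : ↥P, (σ p : X) = s p) →
        ∀ T : ↥(tiles S P),
          (((dite (σ ∈ permutator S P)
            (fun h => tilePerm S hS h.choose_spec.1 h.choose_spec.2.1)
            (fun _ => 1)) T : Set X) : Set X) = s '' (T : Set X) := by
      intro σ h s hs hsP hσ T
      rw [dif_pos h]
      rw [tilePerm_apply]
      refine hagree ?_ (T : Set X) T.2.1.2.subset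
      intro p hp
      have h1 := h.choose_spec.2.2 ⟨p, hp⟩
      have h2 := hσ ⟨p, hp⟩
      rw [← h1, h2]
    refine ⟨fun σ => dite (σ ∈ permutator S P)
      (fun h => tilePerm S hS h.choose_spec.1 h.choose_spec.2.1)
      (fun _ => 1), ?_, ?_, ?_, ?_⟩
    · rintro σ hσ
      obtain ⟨s, hs, hsP, hσs⟩ := hσ
      exact ⟨s, hs, hsP, fun T => hψkey σ ⟨s, hs, hsP, hσs⟩ s hs hsP hσs T⟩
    · rintro σ hσm τ hτm
      obtain ⟨s, hs, hsP, hσ⟩ := hσm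
      obtain ⟨t, ht, htP, hτ⟩ := hτm
      have hστ : σ * τ ∈ permutator S P := by
        refine ⟨fun x => s (t x), hS t ht s hs, ?_, ?_⟩
        · show (fun x => s (t x)) '' P = P
          rw [← Set.image_image, htP, hsP]
        · intro p
          rw [Equiv.Perm.mul_apply, hσ, hτ]
      apply Equiv.ext
      intro T
      apply Subtype.ext
      rw [Equiv.Perm.mul_apply]
      rw [hψkey (σ * τ) hστ _ (hS t ht s hs)
        (by show (fun x => s (t x)) '' P = P; rw [← Set.image_image, htP, hsP])
        (fun p => by rw [Equiv.Perm.mul_apply, hσ, hτ]) T]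
      rw [hψkey σ ⟨s, hs, hsP, hσ⟩ s hs hsP hσ]
      rw [hψkey τ ⟨t, ht, htP, hτ⟩ t ht htP hτ T]
      rw [Set.image_image]
    · rintro h ⟨s, hs, hsP, hh⟩
      have hmt : Set.MapsTo s P P := by rw [Set.mapsTo_iff_image_subset]; exact hsP.subset
      have hbij : Set.BijOn s P P :=
        (Set.Finite.surjOn_iff_bijOn_of_mapsTo (Set.toFinite P) hmt).1 hsP.symm.subset
      let σ : Equiv.Perm ↥P := Equiv.ofBijective
        (fun p => (⟨s p.val, hmt p.2⟩ : ↥P)) (by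
          constructor
          · intro p q hpq
            exact Subtype.ext (hbij.injOn p.2 q.2 (congrArg Subtype.val hpq))
          · intro p
            obtain ⟨q, hq, hqe⟩ := hbij.surjOn p.2
            exact ⟨⟨q, hq⟩, Subtype.ext hqe⟩)
      have hσm : σ ∈ permutator S P := ⟨s, hs, hsP, fun p => rfl⟩
      refine ⟨σ, hσm, ?_⟩
      apply Equiv.ext
      intro T
      apply Subtype.ext
      rw [hψkey σ hσm s hs hsP (fun p => rfl) T, hh T]
    · intro s hs hsP σ hσm hσs T
      exact hψkey σ hσm s hs hsP hσs T

end Holonomy
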